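/- For any Dyck word x ∈ D_n with canonical decomposition x = 1u0v, starting at x and flipping the bit positions given by the flip sequence σ(x) one after the other produces a path P_σ(x) in the graph H_n whose last vertex is u01v ∈ D_n^-; in particular, every intermediate bitstring has weight n or n-1. -/

import Mathlib

/-- A bitstring is a Dyck word if it has as many 1s (`true`) as 0s (`false`) and
every prefix has at least as many 1s as 0s. -/
def isDyck (x : List Bool) : Prop :=
  x.count true = x.count false ∧
  ∀ k : ℕ, (x.take k).count false ≤ (x.take k).count true

/-- The set `D_n^-` of bitstrings of length `2n` with weight `n` having exactly one
prefix with strictly more 0s than 1s. -/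
def dyckWordsMinus (n : ℕ) : Set (List Bool) :=
  {x | x.length = 2 * n ∧ x.count true = n ∧
    ((Finset.range (2 * n + 1)).filter
      (fun k => (x.take k).count true < (x.take k).count false)).card = 1}

/-- Flip the bit at (1-indexed) position `p` of the bitstring `y`. -/
def flipAt (y : List Bool) (p : ℕ) : List Bool :=
  y.set (p - 1) (!(y.getD (p - 1) false))

/-- Two bitstrings differ in exactly one bit. -/
def differOne (x y : List Bool) : Prop :=
  x.length = y.length ∧ (List.zipWith xor x y).count true = 1

namespace StmtAux

def verts (y : List Bool) (L : List ℕ) : List (List Bool) :=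
  (List.range (L.length + 1)).map (fun k => (L.take k).foldl flipAt y)

lemma verts_nil (y : List Bool) : verts y [] = [y] := rfl

lemma verts_cons (y : List Bool) (p : ℕ) (L : List ℕ) :
    verts y (p :: L) = y :: verts (flipAt y p) L := by
  unfold verts
  rw [List.length_cons, List.range_succ_eq_map]
  simp [List.map_map, Function.comp_def]

lemma verts_ne_nil (y : List Bool) (L : List ℕ) : verts y L ≠ [] := by
  unfold verts; simp [List.range_succ_eq_map]

lemma verts_append (y : List Bool) (L1 L2 : List ℕ) :
    verts y (L1 ++ L2) = (verts y L1).dropLast ++ verts (L1.foldl flipAt y) L2 := by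
  induction L1 generalizing y with
  | nil => simp [verts_nil]
  | cons p L ih =>
      rw [List.cons_append, verts_cons, ih, verts_cons]
      rw [List.dropLast_cons_of_ne_nil]
      · simp
      · exact verts_ne_nil _ _

lemma verts_last (y : List Bool) (L : List ℕ) :
    verts y L = (verts y L).dropLast ++ [L.foldl flipAt y] := by
  induction L generalizing y with
  | nil => simp [verts_nil]
  | cons p M ih =>
      rw [verts_cons, List.foldl_cons, List.dropLast_cons_of_ne_nil (verts_ne_nil _ _)]
      rw [List.cons_append]
      congr 1
      exact ih (flipAt y p)

lemma mem_verts {z y : List Bool} {L : List ℕ} :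
    z ∈ verts y L ↔ ∃ k, k ≤ L.length ∧ z = (L.take k).foldl flipAt y := by
  unfold verts
  simp only [List.mem_map, List.mem_range]
  constructor
  · rintro ⟨k, hk, rfl⟩; exact ⟨k, by omega, rfl⟩
  · rintro ⟨k, hk, rfl⟩; exact ⟨k, by omega, rfl⟩

lemma take_foldl_mem_verts (y : List Bool) (L : List ℕ) {k : ℕ} (hk : k ≤ L.length) :
    (L.take k).foldl flipAt y ∈ verts y L := mem_verts.mpr ⟨k, hk, rfl⟩

lemma length_flipAt (y : List Bool) (p : ℕ) : (flipAt y p).length = y.length := by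
  simp [flipAt]

lemma length_foldl (y : List Bool) (M : List ℕ) : (M.foldl flipAt y).length = y.length := by
  induction M generalizing y with
  | nil => rfl
  | cons p M ih => rw [List.foldl_cons, ih (flipAt y p), length_flipAt]

lemma length_mem_verts {z y : List Bool} {L : List ℕ} (hz : z ∈ verts y L) :
    z.length = y.length := by
  obtain ⟨k, -, rfl⟩ := mem_verts.mp hz
  exact length_foldl _ _

lemma getD_flipAt_ne (y : List Bool) (p j : ℕ) (h1 : 1 ≤ p) (h : p ≠ j + 1) :
    (flipAt y p).getD j false = y.getD j false := by
  unfold flipAt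
  simp [List.getD, List.getElem?_set_ne (show p - 1 ≠ j by omega)]

lemma getD_foldl_ne {y : List Bool} {M : List ℕ} {j : ℕ}
    (hM : ∀ p ∈ M, 1 ≤ p ∧ p ≠ j + 1) :
    (M.foldl flipAt y).getD j false = y.getD j false := by
  induction M generalizing y with
  | nil => rfl
  | cons p M ih =>
      rw [List.foldl_cons, ih (fun q hq => hM q (List.mem_cons_of_mem _ hq)),
        getD_flipAt_ne _ _ _ (hM p List.mem_cons_self).1 (hM p List.mem_cons_self).2]

lemma getD_mem_verts {z y : List Bool} {L : List ℕ} {j : ℕ}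
    (hL : ∀ p ∈ L, 1 ≤ p ∧ p ≠ j + 1) (hz : z ∈ verts y L) :
    z.getD j false = y.getD j false := by
  obtain ⟨k, -, rfl⟩ := mem_verts.mp hz
  exact getD_foldl_ne (fun p hp => hL p (List.mem_of_mem_take hp))

lemma getD_app (A l : List Bool) (j : ℕ) (d : Bool) :
    (A ++ l).getD (A.length + j) d = l.getD j d := by
  simp [List.getD, List.getElem?_append_right (Nat.le_add_right _ _)]

lemma set_app (A l : List Bool) (j : ℕ) (c : Bool) :
    (A ++ l).set (A.length + j) c = A ++ l.set j c := by
  induction A with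
  | nil => simp
  | cons a A ih => simpa [Nat.succ_add] using ih

lemma flip_mid (A : List Bool) (c : Bool) (rest : List Bool) :
    flipAt (A ++ c :: rest) (A.length + 1) = A ++ (!c) :: rest := by
  unfold flipAt
  have h1 : A.length + 1 - 1 = A.length + 0 := by omega
  rw [h1, getD_app, set_app]
  rfl

lemma count_true_add_count_false (l : List Bool) : l.count true + l.count false = l.length := by
  induction l with
  | nil => rfl
  | cons a l ih => cases a <;> simp [List.count_cons] <;> omega

lemma zip_self (t : List Bool) : (List.zipWith xor t t).count true = 0 := by
  induction t with
  | nil => rfl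
  | cons c t ih => simpa using ih

lemma differOne_set {y : List Bool} {i : ℕ} (h : i < y.length) :
    differOne y (y.set i (!(y.getD i false))) := by
  constructor
  · simp
  · induction y generalizing i with
    | nil => simp at h
    | cons c t ih =>
        cases i with
        | zero => simpa using zip_self t
        | succ i =>
            have := ih (by simpa using Nat.lt_of_succ_lt_succ h)
            simpa [List.getD] using this

section Decomp

def b2s (b : Bool) : DyckStep := if b then DyckStep.U else DyckStep.D
def s2b (s : DyckStep) : Bool := match s with | DyckStep.U => true | DyckStep.D => false

lemma b2s_inj : Function.Injective b2s := by
  intro a b h; cases a <;> cases b <;> simp [b2s] at h ⊢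

lemma s2b_b2s (b : Bool) : s2b (b2s b) = b := by cases b <;> rfl

lemma count_map_U (l : List Bool) : (l.map b2s).count DyckStep.U = l.count true := by
  simpa [b2s] using List.count_map_of_injective l b2s b2s_inj true
lemma count_map_D (l : List Bool) : (l.map b2s).count DyckStep.D = l.count false := by
  simpa [b2s] using List.count_map_of_injective l b2s b2s_inj false
lemma count_mapb_true (l : List DyckStep) : (l.map s2b).count true = l.count DyckStep.U := by
  have : Function.Injective s2b := by intro a b h; cases a <;> cases b <;> simp [s2b] at h ⊢
  simpa [s2b] using List.count_map_of_injective l s2b this DyckStep.U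
lemma count_mapb_false (l : List DyckStep) : (l.map s2b).count false = l.count DyckStep.D := by
  have : Function.Injective s2b := by intro a b h; cases a <;> cases b <;> simp [s2b] at h ⊢
  simpa [s2b] using List.count_map_of_injective l s2b this DyckStep.D

lemma isDyck_of_dyckWord (p : DyckWord) : isDyck (p.toList.map s2b) := by
  constructor
  · rw [count_mapb_true, count_mapb_false]; exact p.count_U_eq_count_D
  · intro k
    rw [← List.map_take, count_mapb_true, count_mapb_false]
    exact p.count_D_le_count_U k

lemma dyck_decomp {w : List Bool} (hw : isDyck w) (hne : w ≠ []) :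
    ∃ u' v', isDyck u' ∧ isDyck v' ∧ w = [true] ++ u' ++ [false] ++ v' := by
  set p : DyckWord := ⟨w.map b2s, by rw [count_map_U, count_map_D]; exact hw.1, by
    intro i
    rw [← List.map_take, count_map_U, count_map_D]
    exact hw.2 i⟩ with hp
  have hp0 : p ≠ 0 := by
    rw [← DyckWord.toList_ne_nil, hp]
    simpa using hne
  have hsplit := DyckWord.nest_insidePart_add_outsidePart hp0
  have hlist : ([DyckStep.U] ++ p.insidePart.toList ++ [DyckStep.D]) ++ p.outsidePart.toList
      = w.map b2s := congrArg DyckWord.toList hsplit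
  refine ⟨p.insidePart.toList.map s2b, p.outsidePart.toList.map s2b,
    isDyck_of_dyckWord _, isDyck_of_dyckWord _, ?_⟩
  have hww : w = (w.map b2s).map s2b := by
    rw [List.map_map]
    conv_lhs => rw [← List.map_id w]
    exact (List.map_congr_left (fun b _ => (s2b_b2s b).symm))
  rw [hww, ← hlist]
  simp [s2b]

end Decomp

lemma take_eq_of_getD {z y : List Bool} (hlen : z.length = y.length)
    {m : ℕ} (hm : m ≤ y.length)
    (h : ∀ j, j < m → z.getD j false = y.getD j false) : z.take m = y.take m := by
  apply List.ext_getElem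
  · simp; omega
  · intro j h1 h2
    have hj : j < m := (by simpa using h1 : j < m ∧ j < z.length).1
    have := h j hj
    rw [List.getD_eq_getElem?_getD, List.getD_eq_getElem?_getD,
      List.getElem?_eq_getElem (by omega), List.getElem?_eq_getElem (by omega),
      Option.getD_some, Option.getD_some] at this
    simpa [List.getElem_take] using this

end StmtAux


namespace StmtAux

variable (s : ℕ → List Bool → List ℕ)

lemma main_nil (hs0 : ∀ a : ℕ, s a [] = []) (A B : List Bool) :
    (∀ p ∈ s (A.length + 2) ([] : List Bool),
        A.length + 1 ≤ p ∧ p ≤ A.length + 1 + ([] : List Bool).length) ∧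
    (s (A.length + 2) []).foldl flipAt (A ++ false :: (([] : List Bool) ++ B)) =
        A ++ (([] : List Bool) ++ false :: B) ∧
    (∀ z ∈ verts (A ++ false :: (([] : List Bool) ++ B)) (s (A.length + 2) []),
      z.count true = (A ++ false :: (([] : List Bool) ++ B)).count true ∨
      z.count true = (A ++ false :: (([] : List Bool) ++ B)).count true + 1) ∧
    (verts (A ++ false :: (([] : List Bool) ++ B)) (s (A.length + 2) [])).Nodup ∧
    (A ++ true :: (([] : List Bool) ++ B)) ∉
        verts (A ++ false :: (([] : List Bool) ++ B)) (s (A.length + 2) []) := by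
  rw [hs0]
  refine ⟨by simp, by simp, ?_, ?_, ?_⟩
  · intro z hz
    rw [verts_nil, List.mem_singleton] at hz
    subst hz
    left; rfl
  · rw [verts_nil]; exact List.nodup_singleton _
  · rw [verts_nil, List.mem_singleton]
    simp

end StmtAux

namespace StmtAux

lemma main' (s : ℕ → List Bool → List ℕ) (hs0 : ∀ a : ℕ, s a [] = [])
    (hsrec : ∀ (a : ℕ) (u' v' : List Bool), isDyck u' → isDyck v' →
      s a ([true] ++ u' ++ [false] ++ v') =
        [a + u'.length + 1, a] ++ s (a + 1) u' ++ [a - 1, a + u'.length + 1] ++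
          s (a + u'.length + 2) v') :
    ∀ (N : ℕ) (w : List Bool), w.length ≤ N → isDyck w →
    ∀ A B : List Bool,
      (∀ p ∈ s (A.length + 2) w, A.length + 1 ≤ p ∧ p ≤ A.length + 1 + w.length) ∧
      (s (A.length + 2) w).foldl flipAt (A ++ false :: (w ++ B)) = A ++ (w ++ false :: B) ∧
      (∀ z ∈ verts (A ++ false :: (w ++ B)) (s (A.length + 2) w),
        z.count true = (A ++ false :: (w ++ B)).count true ∨
        z.count true = (A ++ false :: (w ++ B)).count true + 1) ∧
      (verts (A ++ false :: (w ++ B)) (s (A.length + 2) w)).Nodup ∧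
      (A ++ true :: (w ++ B)) ∉ verts (A ++ false :: (w ++ B)) (s (A.length + 2) w) := by
  intro N
  induction N with
  | zero =>
      intro w hw hD A B
      have : w = [] := List.length_eq_zero_iff.mp (Nat.le_zero.mp hw)
      subst this
      exact main_nil s hs0 A B
  | succ N ih =>
      intro w hwN hD A B
      by_cases hne : w = []
      · subst hne; exact main_nil s hs0 A B
      obtain ⟨u', v', hu', hv', hwdec⟩ := dyck_decomp hD hne
      subst hwdec
      have hu'N : u'.length ≤ N := by
        simp only [List.length_append, List.length_cons, List.length_nil] at hwN; omega
      have hv'N : v'.length ≤ N := by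
        simp only [List.length_append, List.length_cons, List.length_nil] at hwN; omega
      obtain ⟨I1P1, I1P2, I1P3, I1P4, I1P5⟩ := ih u' hu'N hu' (A ++ [false]) (true :: (v' ++ B))
      obtain ⟨I2P1, I2P2, I2P3, I2P4, I2P5⟩ := ih v' hv'N hv' (A ++ true :: (u' ++ [false])) B
      set L1 := s ((A ++ [false]).length + 2) u' with hL1def
      set L2 := s ((A ++ true :: (u' ++ [false])).length + 2) v' with hL2def
      -- canonical vertex forms
      set yc := A ++ false :: true :: (u' ++ false :: (v' ++ B)) with hyc
      set y1 := A ++ false :: true :: (u' ++ true :: (v' ++ B)) with hy1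
      set y2 := A ++ false :: false :: (u' ++ true :: (v' ++ B)) with hy2
      set y3 := A ++ false :: (u' ++ false :: true :: (v' ++ B)) with hy3
      set y4 := A ++ true :: (u' ++ false :: true :: (v' ++ B)) with hy4
      set y5 := A ++ true :: (u' ++ false :: false :: (v' ++ B)) with hy5
      set yF := A ++ true :: (u' ++ false :: (v' ++ false :: B)) with hyF
      -- rewrite IH bases to canonical forms
      have hy2eq : (A ++ [false]) ++ false :: (u' ++ true :: (v' ++ B)) = y2 := by
        rw [hy2]; simp
      have hy5eq : (A ++ true :: (u' ++ [false])) ++ false :: (v' ++ B) = y5 := by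
        rw [hy5]; simp
      rw [hy2eq] at I1P2 I1P3 I1P4 I1P5
      rw [hy5eq] at I2P2 I2P3 I2P4 I2P5
      have hy1eq : (A ++ [false]) ++ true :: (u' ++ true :: (v' ++ B)) = y1 := by
        rw [hy1]; simp
      rw [hy1eq] at I1P5
      have hy4eq : (A ++ true :: (u' ++ [false])) ++ true :: (v' ++ B) = y4 := by
        rw [hy4]; simp
      rw [hy4eq] at I2P5
      have g3 : L1.foldl flipAt y2 = y3 := by
        rw [I1P2, hy3]; simp
      have g6 : L2.foldl flipAt y5 = yF := by
        rw [I2P2, hyF]; simp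
      -- original base equals canonical
      have hyorig : A ++ false :: (([true] ++ u' ++ [false] ++ v') ++ B) = yc := by
        rw [hyc]; simp
      -- flip sequence decomposition
      have hL : s (A.length + 2) ([true] ++ u' ++ [false] ++ v') =
          (A.length + u'.length + 3) :: (A.length + 2) ::
            (L1 ++ ((A.length + 1) :: (A.length + u'.length + 3) :: L2)) := by
        rw [hsrec _ _ _ hu' hv']
        rw [hL1def, hL2def]
        have e1 : A.length + 2 + u'.length + 1 = A.length + u'.length + 3 := by omega
        have e2 : A.length + 2 + 1 = (A ++ [false]).length + 2 := by
          simp only [List.length_append, List.length_cons, List.length_nil]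
        have e3 : A.length + 2 - 1 = A.length + 1 := by omega
        have e4 : A.length + 2 + u'.length + 2 = (A ++ true :: (u' ++ [false])).length + 2 := by
          simp only [List.length_append, List.length_cons, List.length_nil]; omega
        rw [e1, e2, e3, e4]
        simp
      -- the four single flips
      have f1 : flipAt yc (A.length + u'.length + 3) = y1 := by
        have h1 : yc = (A ++ false :: true :: u') ++ false :: (v' ++ B) := by rw [hyc]; simp
        have h2 : A.length + u'.length + 3 = (A ++ false :: true :: u').length + 1 := by
          simp only [List.length_append, List.length_cons]; omega
        rw [h1, h2, flip_mid, hy1]; simp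
      have f2 : flipAt y1 (A.length + 2) = y2 := by
        have h1 : y1 = (A ++ [false]) ++ true :: (u' ++ true :: (v' ++ B)) := by rw [hy1]; simp
        have h2 : A.length + 2 = (A ++ [false]).length + 1 := by
          simp only [List.length_append, List.length_cons, List.length_nil]
        rw [h1, h2, flip_mid, hy2]; simp
      have f4 : flipAt y3 (A.length + 1) = y4 := by
        rw [hy3, flip_mid, hy4]; simp
      have f5 : flipAt y4 (A.length + u'.length + 3) = y5 := by
        have h1 : y4 = (A ++ true :: (u' ++ [false])) ++ true :: (v' ++ B) := by rw [hy4]; simp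
        have h2 : A.length + u'.length + 3 = (A ++ true :: (u' ++ [false])).length + 1 := by
          simp only [List.length_append, List.length_cons, List.length_nil]; omega
        rw [h1, h2, flip_mid, hy5]; simp
      -- vertex list decomposition
      have hV : verts (A ++ false :: (([true] ++ u' ++ [false] ++ v') ++ B))
            (s (A.length + 2) ([true] ++ u' ++ [false] ++ v'))
          = yc :: y1 :: (verts y2 L1 ++ y4 :: verts y5 L2) := by
        rw [hyorig, hL, verts_cons, f1, verts_cons, f2, verts_append, g3,
          verts_cons, f4, verts_cons, f5]
        have vl := verts_last y2 L1
        rw [g3] at vl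
        rw [show (y3 :: y4 :: verts y5 L2) = [y3] ++ (y4 :: verts y5 L2) from rfl,
          ← List.append_assoc, ← vl]
      -- counts
      have cyc : yc.count true = A.count true + (u'.count true + (v'.count true + B.count true)) + 1 := by
        rw [hyc]; simp [List.count_append, List.count_cons]; omega
      have cy1 : y1.count true = A.count true + (u'.count true + (v'.count true + B.count true)) + 2 := by
        rw [hy1]; simp [List.count_append, List.count_cons]; omega
      have cy2 : y2.count true = A.count true + (u'.count true + (v'.count true + B.count true)) + 1 := by
        rw [hy2]; simp [List.count_append, List.count_cons]; omega
      have cy4 : y4.count true = A.count true + (u'.count true + (v'.count true + B.count true)) + 2 := by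
        rw [hy4]; simp [List.count_append, List.count_cons]; omega
      have cy5 : y5.count true = A.count true + (u'.count true + (v'.count true + B.count true)) + 1 := by
        rw [hy5]; simp [List.count_append, List.count_cons]; omega
      -- coordinate facts
      have hj0 : ∀ z ∈ verts y2 L1, z.getD A.length false = false := by
        intro z hz
        rw [getD_mem_verts (fun p hp => ?_) hz]
        · rw [hy2]
          simpa using getD_app A (false :: false :: (u' ++ true :: (v' ++ B))) 0 false
        · have := I1P1 p hp
          simp only [List.length_append, List.length_cons, List.length_nil] at this
          constructor <;> omega
      have hj0' : ∀ z ∈ verts y5 L2, z.getD A.length false = true := by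
        intro z hz
        rw [getD_mem_verts (fun p hp => ?_) hz]
        · rw [hy5]
          simpa using getD_app A (true :: (u' ++ false :: false :: (v' ++ B))) 0 false
        · have := I2P1 p hp
          simp only [List.length_append, List.length_cons, List.length_nil] at this
          constructor <;> omega
      have hycj0 : yc.getD A.length false = false := by
        rw [hyc]; simpa using getD_app A (false :: true :: (u' ++ false :: (v' ++ B))) 0 false
      have hy1j0 : y1.getD A.length false = false := by
        rw [hy1]; simpa using getD_app A (false :: true :: (u' ++ true :: (v' ++ B))) 0 false
      have hy4j0 : y4.getD A.length false = true := by
        rw [hy4]; simpa using getD_app A (true :: (u' ++ false :: true :: (v' ++ B))) 0 false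
      have hycj1 : yc.getD (A.length + u'.length + 2) false = false := by
        have h1 : yc = (A ++ false :: true :: u') ++ false :: (v' ++ B) := by rw [hyc]; simp
        have h2 : A.length + u'.length + 2 = (A ++ false :: true :: u').length + 0 := by
          simp only [List.length_append, List.length_cons]; omega
        rw [h1, h2, getD_app]; rfl
      have hy1j1 : y1.getD (A.length + u'.length + 2) false = true := by
        have h1 : y1 = (A ++ false :: true :: u') ++ true :: (v' ++ B) := by rw [hy1]; simp
        have h2 : A.length + u'.length + 2 = (A ++ false :: true :: u').length + 0 := by
          simp only [List.length_append, List.length_cons]; omega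
        rw [h1, h2, getD_app]; rfl
      have hj1 : ∀ z ∈ verts y2 L1, z.getD (A.length + u'.length + 2) false = true := by
        intro z hz
        rw [getD_mem_verts (fun p hp => ?_) hz]
        · have h1 : y2 = (A ++ false :: false :: u') ++ true :: (v' ++ B) := by rw [hy2]; simp
          have h2 : A.length + u'.length + 2 = (A ++ false :: false :: u').length + 0 := by
            simp only [List.length_append, List.length_cons]; omega
          rw [h1, h2, getD_app]; rfl
        · have := I1P1 p hp
          simp only [List.length_append, List.length_cons, List.length_nil] at this
          constructor <;> omega
      refine ⟨?_, ?_, ?_, ?_, ?_⟩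
      · -- P1
        intro p hp
        rw [hL] at hp
        simp only [List.mem_cons, List.mem_append] at hp
        simp only [List.length_append, List.length_cons, List.length_nil]
        rcases hp with h | h | (h | (h | h | h))
        · omega
        · omega
        · have := I1P1 p h
          simp only [List.length_append, List.length_cons, List.length_nil] at this
          omega
        · omega
        · omega
        · have := I2P1 p h
          simp only [List.length_append, List.length_cons, List.length_nil] at this
          omega
      · -- P2
        rw [hyorig, hL]
        simp only [List.foldl_cons]
        rw [f1, f2, List.foldl_append, g3]
        simp only [List.foldl_cons]
        rw [f4, f5, g6, hyF]
        simp
      · -- P3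
        intro z hz
        rw [hV] at hz
        rw [hyorig]
        simp only [List.mem_cons, List.mem_append] at hz
        rcases hz with rfl | rfl | (h | (rfl | h))
        · left; rfl
        · right; omega
        · rcases I1P3 z h with h' | h' <;> omega
        · right; omega
        · rcases I2P3 z h with h' | h' <;> omega
      · -- P4 (Nodup)
        rw [hV]
        refine List.nodup_cons.mpr ⟨?_, List.nodup_cons.mpr ⟨?_, ?_⟩⟩
        · intro hmem
          rcases List.mem_cons.mp hmem with heq | hmem'
          · have := hycj1; rw [heq, hy1j1] at this; exact absurd this (by simp)
          rcases List.mem_append.mp hmem' with h | h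
          · have := hycj1; rw [hj1 yc h] at this; exact absurd this (by simp)
          rcases List.mem_cons.mp h with heq | h
          · have := hycj0; rw [heq, hy4j0] at this; exact absurd this (by simp)
          · have := hycj0; rw [hj0' yc h] at this; exact absurd this (by simp)
        · intro hmem
          rcases List.mem_append.mp hmem with h | h
          · exact I1P5 h
          rcases List.mem_cons.mp h with heq | h
          · have := hy1j0; rw [heq, hy4j0] at this; exact absurd this (by simp)
          · have := hy1j0; rw [hj0' y1 h] at this; exact absurd this (by simp)
        · refine List.Nodup.append I1P4 (List.nodup_cons.mpr ⟨I2P5, I2P4⟩) ?_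
          intro z hz1 hz2
          rcases List.mem_cons.mp hz2 with heq | hz2'
          · have := hj0 z hz1; rw [heq, hy4j0] at this; exact absurd this (by simp)
          · have := hj0 z hz1; rw [hj0' z hz2'] at this; exact absurd this (by simp)
      · -- P5
        intro hmem
        rw [hV] at hmem
        set T := A ++ true :: (([true] ++ u' ++ [false] ++ v') ++ B) with hT
        have hTc : T = A ++ true :: true :: (u' ++ false :: (v' ++ B)) := by rw [hT]; simp
        have hTj0 : T.getD A.length false = true := by
          rw [hTc]; simpa using getD_app A (true :: true :: (u' ++ false :: (v' ++ B))) 0 false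
        have contra : ∀ r : List Bool, T ≠ (A ++ true :: (u' ++ [false])) ++ r := by
          intro r heq
          rw [hTc] at heq
          have heq2 : A ++ true :: true :: (u' ++ false :: (v' ++ B))
              = A ++ true :: (u' ++ false :: r) := by rw [heq]; simp
          have h2 := List.append_cancel_left heq2
          have h3 : true :: (u' ++ false :: (v' ++ B)) = u' ++ false :: r := by
            injection h2
          have h4 : (true :: (u' ++ false :: (v' ++ B))).take (u'.length + 1)
              = (u' ++ false :: r).take (u'.length + 1) := by rw [h3]
          have h5 : (u' ++ false :: r).take (u'.length + 1) = u' ++ [false] := by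
            rw [List.take_append]
            simp
          have h6 : (true :: (u' ++ false :: (v' ++ B))).take (u'.length + 1) = true :: u' := by
            rw [List.take_succ_cons, List.take_append_of_le_length (le_refl u'.length),
              List.take_length]
          rw [h5, h6] at h4
          have hcount := congrArg (fun l => l.count true) h4
          simp only [List.count_cons, List.count_append] at hcount
          simp at hcount
        rcases List.mem_cons.mp hmem with heq | hmem'
        · have := hTj0; rw [heq, hycj0] at this; exact absurd this (by simp)
        rcases List.mem_cons.mp hmem' with heq | hmem''
        · have := hTj0; rw [heq, hy1j0] at this; exact absurd this (by simp)
        rcases List.mem_append.mp hmem'' with h | h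
        · have := hTj0; rw [hj0 T h] at this; exact absurd this (by simp)
        rcases List.mem_cons.mp h with heq | h
        · exact contra (true :: (v' ++ B)) (heq.trans hy4eq.symm)
        · -- T ∈ verts y5 L2
          have hlen : T.length = y5.length := length_mem_verts h
          have hm : (A ++ true :: (u' ++ [false])).length ≤ y5.length := by
            rw [hy5]
            simp only [List.length_append, List.length_cons, List.length_nil]
            omega
          have htake : T.take (A ++ true :: (u' ++ [false])).length
              = y5.take (A ++ true :: (u' ++ [false])).length := by
            refine take_eq_of_getD hlen hm (fun j hj => ?_)
            refine getD_mem_verts (fun p hp => ?_) h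
            have := I2P1 p hp
            simp only [List.length_append, List.length_cons, List.length_nil] at this hj
            constructor <;> omega
          have hy5take : y5.take (A ++ true :: (u' ++ [false])).length
              = A ++ true :: (u' ++ [false]) := by
            rw [← hy5eq]
            exact List.take_left
          have hsplitT : T = (A ++ true :: (u' ++ [false])) ++
              T.drop (A ++ true :: (u' ++ [false])).length := by
            conv_lhs => rw [← List.take_append_drop (A ++ true :: (u' ++ [false])).length T]
            rw [htake, hy5take]
          exact contra _ hsplitT

end StmtAux

namespace StmtAux

lemma differOne_chain (L : List ℕ) (y : List Bool) (hL : ∀ p ∈ L, 1 ≤ p ∧ p ≤ y.length) :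
    ∀ k, k < L.length → differOne ((L.take k).foldl flipAt y) ((L.take (k+1)).foldl flipAt y) := by
  intro k hk
  have ht : L.take (k+1) = L.take k ++ [L[k]] := by
    rw [List.take_succ]; simp [List.getElem?_eq_getElem hk]
  rw [ht, List.foldl_append]
  simp only [List.foldl_cons, List.foldl_nil]
  have hzlen : ((L.take k).foldl flipAt y).length = y.length := length_foldl y _
  have hp := hL _ (List.getElem_mem hk)
  exact differOne_set (y := (L.take k).foldl flipAt y) (i := L[k] - 1) (by omega)

end StmtAux

open StmtAux in
/-- For a Dyck word `x ∈ D_n` with canonical decomposition `x = 1u0v`, flipping the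
bit positions of the flip sequence `σ(x) = (|u|+2, 1, σ₂(u))` one after the other
produces a path `P_σ(x)` in `H_n`: consecutive vertices differ in exactly one bit,
all vertices are distinct, every vertex has weight `n` or `n+1`, and the last vertex
is `u01v ∈ D_n^-`.  Here `s a x'` plays the role of `σ_a(x')`, required to satisfy
its defining recursion. -/
theorem stmt_12 (n : ℕ) (hn : 1 ≤ n) (s : ℕ → List Bool → List ℕ)
    (hs0 : ∀ a : ℕ, s a [] = [])
    (hsrec : ∀ (a : ℕ) (u' v' : List Bool), isDyck u' → isDyck v' →
      s a ([true] ++ u' ++ [false] ++ v') =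
        [a + u'.length + 1, a] ++ s (a + 1) u' ++ [a - 1, a + u'.length + 1] ++
          s (a + u'.length + 2) v')
    (u v : List Bool) (hu : isDyck u) (hv : isDyck v)
    (x : List Bool) (hx : x = [true] ++ u ++ [false] ++ v)
    (hlen : x.length = 2 * n) :
    ∀ σx : List ℕ, σx = [u.length + 2, 1] ++ s 2 u →
      (∀ k : ℕ, k < σx.length →
        differOne ((σx.take k).foldl flipAt x) ((σx.take (k + 1)).foldl flipAt x)) ∧
      ((List.range (σx.length + 1)).map (fun k => (σx.take k).foldl flipAt x)).Nodup ∧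
      (∀ k : ℕ, k ≤ σx.length →
        ((σx.take k).foldl flipAt x).count true = n ∨
        ((σx.take k).foldl flipAt x).count true = n + 1) ∧
      σx.foldl flipAt x = u ++ [false, true] ++ v ∧
      (u ++ [false, true] ++ v) ∈ dyckWordsMinus n := by
  intro σx hσ
  subst hx hσ
  -- arithmetic facts
  have hls : u.length + v.length + 2 = 2 * n := by
    simp only [List.length_append, List.length_cons, List.length_nil] at hlen; omega
  have hcu : u.count true + u.count false = u.length := count_true_add_count_false u
  have hcv : v.count true + v.count false = v.length := count_true_add_count_false v
  have hcount : u.count true + v.count true + 1 = n := by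
    have h1 := hu.1
    have h2 := hv.1
    omega
  -- main lemma at top level
  obtain ⟨P1, P2, P3, P4, P5⟩ := main' s hs0 hsrec u.length u le_rfl hu [] (true :: v)
  simp only [List.nil_append, List.length_nil, Nat.zero_add] at P1 P2 P3 P4 P5
  -- canonical vertices
  set x0 := [true] ++ u ++ [false] ++ v with hx0
  set x1 := true :: (u ++ true :: v) with hx1
  set x2 := false :: (u ++ true :: v) with hx2
  have f1 : flipAt x0 (u.length + 2) = x1 := by
    have h1 : x0 = (true :: u) ++ false :: v := by rw [hx0]; simp
    have h2 : u.length + 2 = (true :: u).length + 1 := by simp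
    rw [h1, h2, flip_mid, hx1]; simp
  have f2 : flipAt x1 1 = x2 := by
    rw [hx1, hx2]
    simpa using flip_mid [] true (u ++ true :: v)
  have hσc : [u.length + 2, 1] ++ s 2 u = (u.length + 2) :: 1 :: s 2 u := rfl
  have hVx : verts x0 ([u.length + 2, 1] ++ s 2 u) = x0 :: x1 :: verts x2 (s 2 u) := by
    rw [hσc, verts_cons, f1, verts_cons, f2]
  -- counts of the canonical vertices
  have cx0 : x0.count true = n := by
    rw [hx0]
    simp only [List.count_append, List.count_cons, List.count_nil]
    simp
    omega
  have cx1 : x1.count true = n + 1 := by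
    rw [hx1]
    simp only [List.count_append, List.count_cons, List.count_nil]
    simp
    omega
  have cx2 : x2.count true = n := by
    rw [hx2]
    simp only [List.count_append, List.count_cons, List.count_nil]
    simp
    omega
  -- coordinate u.length + 1
  have dx0 : x0.getD (u.length + 1) false = false := by
    have h1 : x0 = (true :: u) ++ false :: v := by rw [hx0]; simp
    have h2 : u.length + 1 = (true :: u).length + 0 := by simp
    rw [h1, h2, getD_app]; rfl
  have dx1 : x1.getD (u.length + 1) false = true := by
    have h1 : x1 = (true :: u) ++ true :: v := by rw [hx1]; simp
    have h2 : u.length + 1 = (true :: u).length + 0 := by simp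
    rw [h1, h2, getD_app]; rfl
  have dsub : ∀ z ∈ verts x2 (s 2 u), z.getD (u.length + 1) false = true := by
    intro z hz
    rw [getD_mem_verts (fun p hp => ?_) hz]
    · have h1 : x2 = (false :: u) ++ true :: v := by rw [hx2]; simp
      have h2 : u.length + 1 = (false :: u).length + 0 := by simp
      rw [h1, h2, getD_app]; rfl
    · have := P1 p hp
      constructor <;> omega
  have hx0len : x0.length = 2 * n := hlen
  refine ⟨?_, ?_, ?_, ?_, ?_⟩
  · -- differOne
    refine differOne_chain _ _ (fun p hp => ?_)
    rw [hσc] at hp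
    rcases List.mem_cons.mp hp with rfl | hp'
    · constructor <;> omega
    rcases List.mem_cons.mp hp' with rfl | hp''
    · constructor <;> omega
    · have := P1 p hp''
      constructor <;> omega
  · -- Nodup
    show (verts x0 ([u.length + 2, 1] ++ s 2 u)).Nodup
    rw [hVx]
    refine List.nodup_cons.mpr ⟨?_, List.nodup_cons.mpr ⟨?_, P4⟩⟩
    · intro hmem
      rcases List.mem_cons.mp hmem with heq | hmem'
      · have := dx0; rw [heq, dx1] at this; exact absurd this (by simp)
      · have := dx0; rw [dsub x0 hmem'] at this; exact absurd this (by simp)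
    · exact P5
  · -- weights
    intro k hk
    have hz : (([u.length + 2, 1] ++ s 2 u).take k).foldl flipAt x0
        ∈ verts x0 ([u.length + 2, 1] ++ s 2 u) := take_foldl_mem_verts _ _ hk
    rw [hVx] at hz
    set z := (([u.length + 2, 1] ++ s 2 u).take k).foldl flipAt x0
    rcases List.mem_cons.mp hz with heq | hz'
    · rw [heq, cx0]; left; rfl
    rcases List.mem_cons.mp hz' with heq | hz''
    · rw [heq, cx1]; right; rfl
    · rcases P3 z hz'' with h | h <;> rw [h, cx2] <;> [left; right] <;> rfl
  · -- final vertex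
    rw [hσc]
    simp only [List.foldl_cons]
    rw [f1, f2, P2]
    simp
  · -- dyckWordsMinus
    refine ⟨?_, ?_, ?_⟩
    · simp only [List.length_append, List.length_cons, List.length_nil]; omega
    · simp only [List.count_append, List.count_cons, List.count_nil]
      simp
      omega
    · have hfil : (Finset.range (2 * n + 1)).filter
          (fun k => ((u ++ [false, true] ++ v).take k).count true
            < ((u ++ [false, true] ++ v).take k).count false) = {u.length + 1} := by
        apply Finset.ext
        intro k
        simp only [Finset.mem_filter, Finset.mem_range, Finset.mem_singleton]
        constructor
        · rintro ⟨hk, hlt⟩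
          by_contra hkne
          rcases Nat.lt_or_ge k (u.length + 1) with hcase | hcase
          · -- k ≤ u.length
            have hk' : k ≤ u.length := by omega
            have ht : (u ++ [false, true] ++ v).take k = u.take k := by
              rw [List.take_append_of_le_length (by simp; omega),
                List.take_append_of_le_length hk']
            rw [ht] at hlt
            exact absurd hlt (not_lt.mpr (hu.2 k))
          · -- k ≥ u.length + 2
            have hk2 : u.length + 2 ≤ k := by omega
            obtain ⟨j, rfl⟩ : ∃ j, k = (u ++ [false, true]).length + j :=
              ⟨k - u.length - 2, by
                simp only [List.length_append, List.length_cons, List.length_nil]; omega⟩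
            rw [List.take_length_add_append] at hlt
            simp only [List.count_append, List.count_cons, List.count_nil] at hlt
            have h1 := hu.1
            have h2 := hv.2 j
            simp at hlt
            omega
        · rintro rfl
          refine ⟨by omega, ?_⟩
          have ht : (u ++ [false, true] ++ v).take (u.length + 1) = u ++ [false] := by
            rw [List.take_append_of_le_length (by simp), List.take_length_add_append]
            rfl
          rw [ht]
          simp only [List.count_append, List.count_cons, List.count_nil]
          have h1 := hu.1
          simp
          omega
      rw [hfil]
      simp
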